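/- arXiv:1909.06316 — 3 statements merged into one kernel-verified Lean document; each statement's English description precedes it below -/
import Mathlib

section
/- Let V be a Hilbert space and H : V → V a bounded self-adjoint operator. Suppose λ is an isolated point of the spectrum of H, with Spec(H) ∩ (λ−δ, λ+δ) = {λ} for some δ > 0. Let P be the orthogonal projection onto ker(H−λ) and Q = I − P. Then (H−λ) restricted to the range of Q is invertible and ‖(H−λ)^{-1}Q‖ ≤ δ^{-1}. -/
open scoped ComplexOrder Pointwise

theorem isolated_spectral_point_inverse_bound
    {V : Type*} [NormedAddCommGroup V] [InnerProductSpace ℂ V] [CompleteSpace V]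
    (H : V →L[ℂ] V) (hH : IsSelfAdjoint H) (lam δ : ℝ) (hδ : 0 < δ)
    (hiso : spectrum ℂ H ∩ Metric.ball (lam : ℂ) δ = {(lam : ℂ)})
    (K : Submodule ℂ V) (hK : K = LinearMap.ker ((H - (lam : ℂ) • (1 : V →L[ℂ] V) : V →L[ℂ] V) : V →ₗ[ℂ] V))
    (P : V →L[ℂ] V) (hP : ∀ u : V, P u ∈ K ∧ u - P u ∈ Kᗮ) :
    (∀ u : V, ‖u - P u‖ ≤ δ⁻¹ * ‖H u - (lam : ℂ) • u‖) ∧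
      Set.BijOn (fun u : V => H u - (lam : ℂ) • u) (Kᗮ : Set V) (Kᗮ : Set V) := by
  set T : V →L[ℂ] V := H - (lam : ℂ) • (1 : V →L[ℂ] V) with hTdef
  have hT : IsSelfAdjoint T := by
    refine hH.sub ?_
    rw [IsSelfAdjoint, star_smul, star_one, RCLike.star_def, Complex.conj_ofReal]
  have hTapp : ∀ u : V, T u = H u - (lam : ℂ) • u := by
    intro u
    simp [hTdef, ContinuousLinearMap.sub_apply, ContinuousLinearMap.smul_apply]
  have hkermem : ∀ w : V, w ∈ K ↔ T w = 0 := by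
    intro w
    rw [hK]
    exact LinearMap.mem_ker
  -- key spectral gap
  have hgap : ∀ x ∈ spectrum ℝ T, x = 0 ∨ δ ≤ |x| := by
    intro x hx
    by_cases h : δ ≤ |x|
    · exact Or.inr h
    left
    have hxC : (x : ℂ) ∈ spectrum ℂ T := by
      rw [← hT.spectrumRestricts.algebraMap_image]
      exact ⟨x, hx, rfl⟩
    have h1 : (lam : ℂ) • (1 : V →L[ℂ] V) = algebraMap ℂ (V →L[ℂ] V) (lam : ℂ) := by
      simp [Algebra.algebraMap_eq_smul_one]
    have hTspec : spectrum ℂ H - ({(lam : ℂ)} : Set ℂ) = spectrum ℂ T := by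
      rw [hTdef, h1]
      exact spectrum.sub_singleton_eq H ((lam : ℂ))
    rw [← hTspec] at hxC
    obtain ⟨z, hz, y, hy, hzy⟩ := hxC
    simp only [Set.mem_singleton_iff] at hy
    subst hy
    have hzball : z ∈ Metric.ball (lam : ℂ) δ := by
      have h2 : dist z (lam : ℂ) = ‖((x : ℂ))‖ := by
        rw [Complex.dist_eq, ← hzy]
      rw [Metric.mem_ball, h2, Complex.norm_real, Real.norm_eq_abs]
      linarith [not_le.mp h]
    have hzeq : z = (lam : ℂ) := by
      have := hiso ▸ Set.mem_inter hz hzball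
      simpa using this
    rw [hzeq] at hzy
    have : (x : ℂ) = 0 := by rw [← hzy]; ring
    exact_mod_cast this
  -- the auxiliary function
  set g : ℝ → ℝ := fun x => x / max (x ^ 2) (δ ^ 2) with hgdef
  have hgc : Continuous g := by
    apply Continuous.div continuous_id (by fun_prop)
    intro x
    have h1 : (0:ℝ) < δ ^ 2 := by positivity
    exact ne_of_gt (lt_of_lt_of_le h1 (le_max_right _ _))
  have hg0 : g 0 = 0 := by simp [hgdef]
  have hgeq : ∀ x : ℝ, δ ≤ |x| → g x = x⁻¹ := by
    intro x hx
    have hx2 : δ ^ 2 ≤ x ^ 2 := by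
      rw [← sq_abs x]
      exact pow_le_pow_left₀ hδ.le hx 2
    have hxne : x ≠ 0 := by
      intro h; rw [h] at hx; simp at hx; linarith
    show x / max (x ^ 2) (δ ^ 2) = x⁻¹
    rw [max_eq_left hx2, sq, div_mul_eq_div_div, div_self hxne, one_div]
  have hginv : ∀ x : ℝ, δ ≤ |x| → x * g x = 1 := by
    intro x hx
    have hxne : x ≠ 0 := by
      intro h; rw [h] at hx; simp at hx; linarith
    rw [hgeq x hx, mul_inv_cancel₀ hxne]
  set S : V →L[ℂ] V := cfc g T with hSdef
  set E : V →L[ℂ] V := cfc (fun x : ℝ => 1 - x * g x) T with hEdef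
  have hE_sa : IsSelfAdjoint E := cfc_predicate _ T
  have hcg : ContinuousOn g (spectrum ℝ T) := hgc.continuousOn
  have hce : ContinuousOn (fun x : ℝ => 1 - x * g x) (spectrum ℝ T) :=
    (continuous_const.sub (continuous_id.mul hgc)).continuousOn
  have hA : cfc (fun x : ℝ => x * g x) T = T * S := by
    rw [hSdef, cfc_mul (fun x : ℝ => x) g T (by fun_prop) hcg, cfc_id' ℝ T]
  have hA' : cfc (fun x : ℝ => x * g x) T = S * T := by
    rw [show (fun x : ℝ => x * g x) = fun x : ℝ => g x * x from funext fun x => mul_comm _ _,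
      cfc_mul g (fun x : ℝ => x) T hcg (by fun_prop), cfc_id' ℝ T, hSdef]
  have hEone : E = 1 - T * S := by
    rw [hEdef, ← hA,
      cfc_sub (fun _ : ℝ => 1) (fun x : ℝ => x * g x) T (by fun_prop)
        ((continuous_id.mul hgc).continuousOn),
      cfc_const_one ℝ T]
  have hTE : T * E = 0 := by
    have h1 : cfc (fun x : ℝ => x * (1 - x * g x)) T = T * E := by
      rw [cfc_mul (fun x : ℝ => x) (fun x : ℝ => 1 - x * g x) T (by fun_prop) hce,
        cfc_id' ℝ T, hEdef]
    rw [← h1, ← cfc_const_zero ℝ T]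
    apply cfc_congr
    intro x hx
    rcases hgap x hx with h | h
    · simp [h]
    · simp [hginv x h]
  have hE2 : E * E = E := by
    rw [hEdef, ← cfc_mul (fun x : ℝ => 1 - x * g x) (fun x : ℝ => 1 - x * g x) T hce hce]
    apply cfc_congr
    intro x hx
    rcases hgap x hx with h | h
    · simp [h, hg0]
    · simp [hginv x h]
  have hnormS : ‖S‖ ≤ δ⁻¹ := by
    rw [hSdef]
    apply norm_cfc_le (by positivity)
    intro x hx
    rcases hgap x hx with h | h
    · rw [h, hg0]; simp; positivity
    · rw [hgeq x h, Real.norm_eq_abs, abs_inv]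
      exact inv_anti₀ hδ h
  -- vector level facts
  have hEK : ∀ v : V, E v ∈ K := by
    intro v
    rw [hkermem]
    have h1 := congrArg (fun (f : V →L[ℂ] V) => f v) hTE
    simpa [ContinuousLinearMap.mul_apply] using h1
  have hEorth : ∀ v ∈ Kᗮ, E v = 0 := by
    intro v hv
    have hEEv : E (E v) = E v := by
      have h1 := congrArg (fun (f : V →L[ℂ] V) => f v) hE2
      simpa [ContinuousLinearMap.mul_apply] using h1
    have h1 : @inner ℂ V _ (E v) (E v) = @inner ℂ V _ v (E (E v)) := hE_sa.isSymmetric v (E v)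
    rw [hEEv] at h1
    have h2 : @inner ℂ V _ v (E v) = 0 :=
      Submodule.inner_left_of_mem_orthogonal (hEK v) hv
    rw [h2] at h1
    exact inner_self_eq_zero.mp h1
  have hTS : ∀ w : V, T (S w) = w - E w := by
    intro w
    have h1 := congrArg (fun (f : V →L[ℂ] V) => f w) hEone
    simp only [ContinuousLinearMap.sub_apply, ContinuousLinearMap.mul_apply,
      ContinuousLinearMap.one_apply] at h1
    rw [h1]
    abel
  have hST : ∀ w : V, S (T w) = w - E w := by
    intro w
    have h1 := congrArg (fun (f : V →L[ℂ] V) => f w) (hA'.symm.trans hA)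
    simp only [ContinuousLinearMap.mul_apply] at h1
    rw [h1, hTS]
  constructor
  · -- the norm bound
    intro u
    obtain ⟨hPu, hQu⟩ := hP u
    have hTPu : T (P u) = 0 := (hkermem _).mp hPu
    have hTu : T (u - P u) = T u := by rw [map_sub, hTPu, sub_zero]
    have hEq : S (T (u - P u)) = u - P u := by
      rw [hST, hEorth _ hQu, sub_zero]
    calc ‖u - P u‖ = ‖S (T (u - P u))‖ := by rw [hEq]
      _ ≤ ‖S‖ * ‖T (u - P u)‖ := S.le_opNorm _
      _ ≤ δ⁻¹ * ‖T (u - P u)‖ :=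
          mul_le_mul_of_nonneg_right hnormS (norm_nonneg _)
      _ = δ⁻¹ * ‖H u - (lam : ℂ) • u‖ := by rw [hTu, hTapp]
  · have hfun : (fun u : V => H u - (lam : ℂ) • u) = fun u : V => T u := by
      funext u; rw [hTapp]
    rw [hfun]
    refine ⟨?_, ?_, ?_⟩
    · -- maps to
      intro v hv
      simp only [SetLike.mem_coe] at hv ⊢
      rw [Submodule.mem_orthogonal]
      intro k hk
      have h1 : @inner ℂ V _ (T k) v = @inner ℂ V _ k (T v) := hT.isSymmetric k v
      rw [(hkermem k).mp hk] at h1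
      rw [← h1, inner_zero_left]
    · -- injective
      intro v₁ h₁ v₂ h₂ heq
      simp only [SetLike.mem_coe] at h₁ h₂
      have heq' : T v₁ = T v₂ := heq
      have hsub : v₁ - v₂ ∈ K := by
        rw [hkermem, map_sub, heq', sub_self]
      have hsub' : v₁ - v₂ ∈ Kᗮ := Submodule.sub_mem _ h₁ h₂
      have h3 : @inner ℂ V _ (v₁ - v₂) (v₁ - v₂) = 0 :=
        Submodule.inner_right_of_mem_orthogonal hsub hsub'
      have := inner_self_eq_zero.mp h3
      rwa [sub_eq_zero] at this
    · -- surjective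
      intro w hw
      simp only [SetLike.mem_coe] at hw
      obtain ⟨hPs, hQs⟩ := hP (S w)
      refine ⟨S w - P (S w), hQs, ?_⟩
      show T (S w - P (S w)) = w
      rw [map_sub, (hkermem _).mp hPs, sub_zero, hTS, hEorth w hw, sub_zero]
end

section
/- Let V be a Hilbert space, ε > 0, C > 0 with C²ε² < 1, and u₁, …, u_N unit vectors in V. Let P be an orthogonal projection on V with ‖(I−P)u_k‖ ≤ Cε for all k and |⟨P u_k, P u_l⟩| ≤ C²ε² for all k ≠ l. Then the dimension of the range of P is at least min(N, ⌊(1 − C²ε²)/(C²ε²)⌋). -/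
set_option maxHeartbeats 1000000

open Finset in
theorem projection_rank_lower_bound
    {V : Type*} [NormedAddCommGroup V] [InnerProductSpace ℂ V] [CompleteSpace V]
    (N : ℕ) (ε C : ℝ) (hε : 0 < ε) (hC : 0 < C) (hCε : C ^ 2 * ε ^ 2 < 1)
    (u : Fin N → V) (hu : ∀ k, ‖u k‖ = 1)
    (P : V →L[ℂ] V) (hPidem : P ∘L P = P) (hPsa : IsSelfAdjoint P)
    (hQ : ∀ k, ‖u k - P (u k)‖ ≤ C * ε)
    (hortho : ∀ k l, k ≠ l → ‖(inner ℂ (P (u k)) (P (u l)) : ℂ)‖ ≤ C ^ 2 * ε ^ 2) :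
    (↑(min N ⌊(1 - C ^ 2 * ε ^ 2) / (C ^ 2 * ε ^ 2)⌋₊) : Cardinal) ≤
      Module.rank ℂ (LinearMap.range (P : V →ₗ[ℂ] V)) := by
  set δ : ℝ := C ^ 2 * ε ^ 2 with hδdef
  have hδpos : 0 < δ := by positivity
  set m := min N ⌊(1 - δ) / δ⌋₊ with hm
  have hmN : m ≤ N := min_le_left _ _
  have hmfl : (m : ℝ) ≤ (1 - δ) / δ := by
    calc (m : ℝ) ≤ (⌊(1 - δ) / δ⌋₊ : ℝ) := by exact_mod_cast min_le_right N _
    _ ≤ (1 - δ) / δ := Nat.floor_le (by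
        apply div_nonneg _ hδpos.le; linarith)
  have hmδ : (m : ℝ) * δ ≤ 1 - δ := by
    rw [le_div_iff₀ hδpos] at hmfl; linarith
  have hsym : ∀ x y : V, (inner ℂ (P x) y : ℂ) = inner ℂ x (P y) :=
    (ContinuousLinearMap.isSelfAdjoint_iff_isSymmetric.mp hPsa)
  have hPP : ∀ x : V, P (P x) = P x := fun x => DFunLike.congr_fun hPidem x
  have hperp : ∀ x : V, (inner ℂ (x - P x) (P x) : ℂ) = 0 := by
    intro x
    rw [inner_sub_left, hsym x (P x), hPP]
    ring
  have hnormv : ∀ k, 1 - δ ≤ ‖P (u k)‖ ^ 2 := by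
    intro k
    have h1 : ‖u k‖ ^ 2 = ‖u k - P (u k)‖ ^ 2 + ‖P (u k)‖ ^ 2 := by
      have := norm_add_sq (𝕜 := ℂ) (u k - P (u k)) (P (u k))
      rw [sub_add_cancel, hperp] at this
      simpa using this
    have h2 : ‖u k - P (u k)‖ ^ 2 ≤ δ := by
      have h3 : ‖u k - P (u k)‖ ^ 2 ≤ (C * ε) ^ 2 :=
        pow_le_pow_left₀ (norm_nonneg _) (hQ k) 2
      calc ‖u k - P (u k)‖ ^ 2 ≤ (C * ε) ^ 2 := h3
      _ = δ := by rw [hδdef]; ring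
    rw [hu k] at h1
    nlinarith
  set v : Fin m → V := fun i => P (u (Fin.castLE hmN i)) with hv
  have hli : LinearIndependent ℂ v := by
    rw [Fintype.linearIndependent_iff]
    intro c hsum
    by_contra hne
    push_neg at hne
    obtain ⟨i₀, hi₀⟩ := hne
    obtain ⟨j, -, hj⟩ := Finset.exists_max_image univ (fun i => ‖c i‖) ⟨i₀, mem_univ _⟩
    have hcj : 0 < ‖c j‖ := lt_of_lt_of_le (norm_pos_iff.mpr hi₀) (hj i₀ (mem_univ _))
    have h0 : (inner ℂ (v j) (∑ i, c i • v i) : ℂ) = 0 := by rw [hsum, inner_zero_right]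
    rw [inner_sum] at h0
    simp_rw [inner_smul_right] at h0
    rw [← Finset.add_sum_erase _ _ (mem_univ j)] at h0
    have key : c j * inner ℂ (v j) (v j) = - ∑ i ∈ univ.erase j, c i * (inner ℂ (v j) (v i) : ℂ) :=
      eq_neg_of_add_eq_zero_left h0
    have hlhs : ‖c j * (inner ℂ (v j) (v j) : ℂ)‖ = ‖c j‖ * ‖v j‖ ^ 2 := by
      rw [norm_mul, inner_self_eq_norm_sq_to_K]
      congr 1
      simp [norm_pow]
    have hrhs : ‖-∑ i ∈ univ.erase j, c i * (inner ℂ (v j) (v i) : ℂ)‖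
        ≤ ((m - 1 : ℕ) : ℝ) * (‖c j‖ * δ) := by
      rw [norm_neg]
      calc ‖∑ i ∈ univ.erase j, c i * (inner ℂ (v j) (v i) : ℂ)‖
          ≤ ∑ i ∈ univ.erase j, ‖c i * (inner ℂ (v j) (v i) : ℂ)‖ := norm_sum_le _ _
        _ ≤ ∑ i ∈ univ.erase j, ‖c j‖ * δ := by
            apply Finset.sum_le_sum
            intro i hi
            rw [norm_mul]
            have hij : i ≠ j := Finset.ne_of_mem_erase hi
            have hne' : Fin.castLE hmN j ≠ Fin.castLE hmN i := by
              intro h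
              exact hij (Fin.castLE_injective hmN h).symm
            exact mul_le_mul (hj i (mem_univ _)) (hortho _ _ hne') (norm_nonneg _)
              (norm_nonneg _)
        _ = ((m - 1 : ℕ) : ℝ) * (‖c j‖ * δ) := by
            rw [Finset.sum_const, nsmul_eq_mul, card_erase_of_mem (mem_univ _), card_univ,
              Fintype.card_fin]
    have hineq : ‖c j‖ * ‖v j‖ ^ 2 ≤ ((m - 1 : ℕ) : ℝ) * (‖c j‖ * δ) := by
      rw [← hlhs, key]; exact hrhs
    have hmpos : 1 ≤ m := j.pos
    have hcast : ((m - 1 : ℕ) : ℝ) = (m : ℝ) - 1 := by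
      rw [Nat.cast_sub hmpos, Nat.cast_one]
    have hlow : (1 - δ) * ‖c j‖ ≤ ‖c j‖ * ‖v j‖ ^ 2 := by
      have := hnormv (Fin.castLE hmN j)
      nlinarith [hcj]
    rw [hcast] at hineq
    nlinarith [hcj, hδpos, hmδ]
  have hmem : ∀ i, v i ∈ LinearMap.range (P : V →ₗ[ℂ] V) := fun i =>
    ⟨u (Fin.castLE hmN i), rfl⟩
  have hliw : LinearIndependent ℂ (fun i => (⟨v i, hmem i⟩ :
      LinearMap.range (P : V →ₗ[ℂ] V))) := by
    apply hli.of_comp (LinearMap.range (P : V →ₗ[ℂ] V)).subtype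
  have := hliw.cardinal_lift_le_rank
  simpa [Cardinal.mk_fin] using this
end

section
/- Let V be a Hilbert space, H a bounded self-adjoint operator, A a self-adjoint operator, and suppose on a spectral subspace: for the spectral projection E = E_H(J) of an interval J, E·i[A,H]·E ≥ C·E with C > 0 (strict Mourre estimate with no compact error). Then H has no eigenvalues in the interior of J. (Virial theorem: if Hu = λu with λ ∈ J and u ∈ dom conditions, then ⟨u, i[A,H]u⟩ = 0, contradicting ⟨u, i[A,H]u⟩ ≥ C‖u‖².) -/
/-- Virial theorem / strict Mourre estimate: if the spectral projection `E` of `H` for an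
interval `J` satisfies `E·i[A,H]·E ≥ C·E` with `C > 0`, then `H` has no eigenvalues in
the interior of `J`. -/
theorem strict_mourre_no_eigenvalues
    {V : Type*} [NormedAddCommGroup V] [InnerProductSpace ℂ V] [CompleteSpace V]
    (H A E : V →L[ℂ] V) (hH : IsSelfAdjoint H) (hA : IsSelfAdjoint A)
    (J : Set ℝ)
    (hEidem : E * E = E) (hEsa : IsSelfAdjoint E) (hEH : E * H = H * E)
    (hEspec : ∀ lam ∈ J, ∀ u : V, H u = (lam : ℂ) • u → E u = u)
    (C : ℝ) (hC : 0 < C)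
    (hMourre : (E * (Complex.I • (A * H - H * A)) * E - (C : ℂ) • E).IsPositive) :
    ∀ lam ∈ interior J, ∀ u : V, H u = (lam : ℂ) • u → u = 0 := by
  intro lam hlam u hu
  have hEu : E u = u := hEspec lam (interior_subset hlam) u hu
  have hEadj : ∀ x y : V, inner ℂ (E x) y = (inner ℂ x (E y) : ℂ) := by
    intro x y
    rw [← ContinuousLinearMap.adjoint_inner_left, hEsa.adjoint_eq]
  have hHadj : ∀ x y : V, inner ℂ (H x) y = (inner ℂ x (H y) : ℂ) := by
    intro x y
    rw [← ContinuousLinearMap.adjoint_inner_left, hH.adjoint_eq]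
  have hpos := hMourre.2 u
  rw [ContinuousLinearMap.reApplyInnerSelf] at hpos
  have key : (inner ℂ ((E * (Complex.I • (A * H - H * A)) * E - (C : ℂ) • E) u) u : ℂ)
      = -(C : ℂ) * inner ℂ u u := by
    have h1 : (A * H - H * A) u = (lam : ℂ) • A u - H (A u) := by
      simp [ContinuousLinearMap.sub_apply, ContinuousLinearMap.mul_apply, hu, map_smul]
    have h2 : (inner ℂ (Complex.I • (A (H u) - H (A u))) u : ℂ) = 0 := by
      rw [inner_smul_left, hu, map_smul, inner_sub_left, inner_smul_left, hHadj, hu,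
        inner_smul_right]
      simp [Complex.conj_ofReal]
    simp only [ContinuousLinearMap.sub_apply, ContinuousLinearMap.mul_apply,
      ContinuousLinearMap.smul_apply, hEu, inner_sub_left, inner_smul_left]
    rw [hEadj, hEu, hu, map_smul]
    rw [hu, map_smul] at h2
    rw [h2]
    simp [Complex.conj_ofReal]
  rw [key] at hpos
  have hre : RCLike.re (-(C : ℂ) * (inner ℂ u u : ℂ)) = -C * ‖u‖ ^ 2 := by
    rw [@inner_self_eq_norm_sq_to_K ℂ,
      show (-(C : ℂ)) = ((-C : ℝ) : ℂ) by push_cast; ring]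
    simp [RCLike.mul_re]
    left
    rw [sq, Complex.mul_re]
    simp [sq]
  rw [hre] at hpos
  have h2 : ‖u‖ ^ 2 = 0 := le_antisymm (by nlinarith) (sq_nonneg _)
  exact norm_eq_zero.mp ((pow_eq_zero_iff two_ne_zero).mp h2)
end
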